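/- Let an infinite run (N = ∞) of the continued fraction algorithm on input z ∈ ℂ be given, and let p, q ∈ 𝒪 with q ≠ 0 be such that p·q_m ≠ q·p_m for every m ≥ 1 (i.e., p/q is not a convergent of the run). Then for every n ≥ 1: |q_n·(q_n·z − p_n)| < 4·ε·μ²·|q·(q·z − p)|/(1 − ε²)². -/

import Mathlib

noncomputable section

namespace CFNE

/-- τ = (Δ + i·√|Δ|)/2. -/
def tau (Δ : ℤ) : ℂ := ((Δ : ℂ) + Complex.I * (Real.sqrt |(Δ : ℝ)|)) / 2

/-- The imaginary quadratic order 𝒪 = ℤ[τ] of discriminant Δ, as a subring of ℂ. -/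
def O (Δ : ℤ) : Subring ℂ := Subring.closure {tau Δ}

/-- A (nonzero or zero) ideal of 𝒪, presented as a subset of ℂ. -/
structure IdealS (Δ : ℤ) where
  carrier : Set ℂ
  subset : carrier ⊆ (O Δ : Set ℂ)
  zero_mem : (0 : ℂ) ∈ carrier
  add_mem : ∀ x ∈ carrier, ∀ y ∈ carrier, x + y ∈ carrier
  neg_mem : ∀ x ∈ carrier, -x ∈ carrier
  smul_mem : ∀ r ∈ (O Δ : Set ℂ), ∀ x ∈ carrier, r * x ∈ carrier

/-- The ideal as an additive subgroup of ℂ. -/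
def IdealS.toAddSubgroup {Δ : ℤ} (I : IdealS Δ) : AddSubgroup ℂ where
  carrier := I.carrier
  zero_mem' := I.zero_mem
  add_mem' := fun hx hy => I.add_mem _ hx _ hy
  neg_mem' := fun hx => I.neg_mem _ hx

/-- The norm of an ideal: the index [𝒪 : 𝔟]. -/
def IdealS.norm {Δ : ℤ} (I : IdealS Δ) : ℕ :=
  I.toAddSubgroup.relIndex (O Δ).toAddSubgroup

/-- The ideal is nonzero. -/
def IdealS.Nonzero {Δ : ℤ} (I : IdealS Δ) : Prop := ∃ x ∈ I.carrier, x ≠ 0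

/-- Two nonzero ideals lie in the same class if x·𝔞 = y·𝔟 for some nonzero x, y ∈ 𝒪. -/
def SameClass {Δ : ℤ} (I J : IdealS Δ) : Prop :=
  ∃ x ∈ (O Δ : Set ℂ), ∃ y ∈ (O Δ : Set ℂ), x ≠ 0 ∧ y ≠ 0 ∧
    (fun t => x * t) '' I.carrier = (fun t => y * t) '' J.carrier

/-- A reduced ideal: a nonzero ideal of minimal norm in its ideal class. -/
def IsReduced {Δ : ℤ} (I : IdealS Δ) : Prop :=
  I.Nonzero ∧ ∀ J : IdealS Δ, J.Nonzero → SameClass I J → I.norm ≤ J.norm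

/-- The inverse fractional ideal 𝔟⁻¹ = {x ∈ ℂ : x·𝔟 ⊆ 𝒪}. -/
def invSet {Δ : ℤ} (I : IdealS Δ) : Set ℂ :=
  {x : ℂ | ∀ y ∈ I.carrier, x * y ∈ (O Δ : Set ℂ)}

/-- The fractional ideal a·𝔟 + b·𝔟⁻¹, as a subset of ℂ. -/
def combSet {Δ : ℤ} (I : IdealS Δ) (a b : ℂ) : Set ℂ :=
  {u : ℂ | ∃ s ∈ I.carrier, ∃ t ∈ invSet I, u = a * s + b * t}

/-- The ideal x·𝒪 + y·𝒪 of 𝒪 generated by x and y, as a subset of ℂ. -/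
def genSet (Δ : ℤ) (x y : ℂ) : Set ℂ :=
  {u : ℂ | ∃ s ∈ (O Δ : Set ℂ), ∃ t ∈ (O Δ : Set ℂ), u = x * s + y * t}

/-- The set is the carrier of a reduced ideal of 𝒪. -/
def IsReducedSet (Δ : ℤ) (S : Set ℂ) : Prop :=
  ∃ J : IdealS Δ, IsReduced J ∧ J.carrier = S

/-- B is admissible with ε ∈ (0,1): B is a nonempty finite subset of 𝒪 ∖ {0}, and for every
reduced ideal 𝔟 with 𝔟 ∩ B ≠ ∅, the discs D(a/b, ε/|b|) over b ∈ 𝔟 ∩ B, a ∈ 𝔟⁻¹ with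
a·𝔟 + b·𝔟⁻¹ reduced, cover ℂ. -/
def Admissible (Δ : ℤ) (B : Set ℂ) (ε : ℝ) : Prop :=
  B.Nonempty ∧ B.Finite ∧ B ⊆ (O Δ : Set ℂ) ∧ (0 : ℂ) ∉ B ∧
  ∀ I : IdealS Δ, IsReduced I → (I.carrier ∩ B).Nonempty →
    ∀ z : ℂ, ∃ b ∈ I.carrier ∩ B, ∃ a ∈ invSet I,
      IsReducedSet Δ (combSet I a b) ∧ ‖z - a / b‖ ≤ ε / ‖b‖

/-- μ = max{|b| : b ∈ B}. -/
def mu (B : Set ℂ) : ℝ := sSup ((fun w : ℂ => ‖w‖) '' B)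

/-- A run of the continued fraction algorithm of length N ∈ ℕ ∪ {∞} on input z. -/
structure Run (Δ : ℤ) (B : Set ℂ) (ε : ℝ) (z : ℂ) (N : ℕ∞) where
  a : ℤ → ℂ
  b : ℤ → ℂ
  p : ℤ → ℂ
  q : ℤ → ℂ
  zs : ℤ → ℂ
  b_zero : b 0 = 1
  p_neg_one : p (-1) = 0
  q_neg_one : q (-1) = 1
  p_zero : p 0 = 1
  q_zero : q 0 = 0
  zs_zero : zs 0 = z
  ha : ∀ n : ℕ, 1 ≤ n → (n : ℕ∞) ≤ N → a n ∈ O Δ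
  hb : ∀ n : ℕ, 1 ≤ n → (n : ℕ∞) ≤ N → b n ∈ B
  hne : ∀ n : ℕ, 1 ≤ n → (n : ℕ∞) ≤ N → b n * zs ((n : ℤ) - 1) - a n ≠ 0
  hclose : ∀ n : ℕ, 1 ≤ n → (n : ℕ∞) ≤ N →
    ‖b n * zs ((n : ℤ) - 1) - a n‖ ≤ ε * ‖b ((n : ℤ) - 1)‖
  hp : ∀ n : ℕ, 1 ≤ n → (n : ℕ∞) ≤ N →
    p n = (a n * p ((n : ℤ) - 1) + b n * p ((n : ℤ) - 2)) / b ((n : ℤ) - 1)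
  hq : ∀ n : ℕ, 1 ≤ n → (n : ℕ∞) ≤ N →
    q n = (a n * q ((n : ℤ) - 1) + b n * q ((n : ℤ) - 2)) / b ((n : ℤ) - 1)
  hz : ∀ n : ℕ, 1 ≤ n → (n : ℕ∞) ≤ N →
    zs n = b ((n : ℤ) - 1) / (b n * zs ((n : ℤ) - 1) - a n)
  hpO : ∀ n : ℕ, 1 ≤ n → (n : ℕ∞) ≤ N → p n ∈ O Δ
  hqO : ∀ n : ℕ, 1 ≤ n → (n : ℕ∞) ≤ N → q n ∈ O Δ
  hred : ∀ n : ℕ, 1 ≤ n → (n : ℕ∞) ≤ N → IsReducedSet Δ (genSet Δ (p n) (q n))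

lemma one_le_abs_of_mem_O (Δ : ℤ) (hΔneg : Δ < 0) (hΔmod : Δ % 4 = 0 ∨ Δ % 4 = 1)
    (x : ℂ) (hx : x ∈ O Δ) (hx0 : x ≠ 0) : 1 ≤ ‖x‖ := by
  obtain ⟨k, hk⟩ : ∃ k : ℤ, 4 * k = Δ^2 - Δ := by
    rcases hΔmod with h | h
    · obtain ⟨t, ht⟩ : (4:ℤ) ∣ Δ := by omega
      exact ⟨t * (Δ - 1), by linear_combination (1 - Δ) * ht⟩
    · obtain ⟨t, ht⟩ : (4:ℤ) ∣ (Δ - 1) := by omega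
      exact ⟨Δ * t, by linear_combination (-Δ) * ht⟩
  have hs : ((Real.sqrt |(Δ : ℝ)| : ℝ) : ℂ)^2 = -(Δ : ℂ) := by
    rw [← Complex.ofReal_pow, Real.sq_sqrt (abs_nonneg _),
      abs_of_neg (show (Δ:ℝ) < 0 by exact_mod_cast hΔneg)]
    push_cast; ring
  have hk' : (4:ℂ) * (k:ℂ) = (Δ:ℂ)^2 - (Δ:ℂ) := by exact_mod_cast hk
  have htau2 : (tau Δ)^2 = (Δ : ℂ) * tau Δ - (k : ℂ) := by
    have hIs : (Complex.I * (Real.sqrt |(Δ : ℝ)| : ℝ))^2 = (Δ:ℂ) := by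
      rw [mul_pow, Complex.I_sq, hs]; ring
    unfold tau
    linear_combination (1/4 : ℂ) * hIs + (1/4 : ℂ) * hk'
  set S : Subring ℂ := {
    carrier := {w | ∃ a b : ℤ, w = (a:ℂ) + (b:ℂ) * tau Δ}
    one_mem' := ⟨1, 0, by push_cast; ring⟩
    zero_mem' := ⟨0, 0, by push_cast; ring⟩
    add_mem' := by
      rintro w v ⟨a1, b1, rfl⟩ ⟨a2, b2, rfl⟩
      exact ⟨a1 + a2, b1 + b2, by push_cast; ring⟩
    neg_mem' := by
      rintro w ⟨a1, b1, rfl⟩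
      exact ⟨-a1, -b1, by push_cast; ring⟩
    mul_mem' := by
      rintro w v ⟨a1, b1, rfl⟩ ⟨a2, b2, rfl⟩
      refine ⟨a1*a2 - k*b1*b2, a1*b2 + a2*b1 + Δ*b1*b2, ?_⟩
      push_cast
      linear_combination ((b1:ℂ)*(b2:ℂ)) * htau2 } with hS
  have hOS : O Δ ≤ S := Subring.closure_le.mpr (by
    intro w hw
    rcases hw with rfl
    exact ⟨0, 1, by push_cast; ring⟩)
  obtain ⟨a, b, rfl⟩ := hOS hx
  have hconj : (starRingEnd ℂ) (tau Δ) = ((Δ:ℂ) - Complex.I * (Real.sqrt |(Δ:ℝ)| : ℝ)) / 2 := by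
    unfold tau
    rw [map_div₀, map_add, map_mul, Complex.conj_I, Complex.conj_ofReal, map_intCast, map_ofNat]
    ring
  have hmul : ((a:ℂ) + b * tau Δ) * (starRingEnd ℂ) ((a:ℂ) + b * tau Δ)
      = ((a^2 + a*b*Δ + b^2*k : ℤ) : ℂ) := by
    rw [map_add, map_mul, hconj, map_intCast, map_intCast]
    unfold tau
    push_cast
    linear_combination ((b:ℂ)^2/4) * hs + (-(b:ℂ)^2/4) * hk' +
      (-((b:ℂ)^2*((Real.sqrt |(Δ:ℝ)|:ℝ):ℂ)^2)/4) * Complex.I_sq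
  have hnsq : Complex.normSq ((a:ℂ) + b * tau Δ) = ((a^2 + a*b*Δ + b^2*k : ℤ) : ℝ) := by
    have h2 : ((Complex.normSq ((a:ℂ) + b * tau Δ) : ℝ) : ℂ) = ((a^2 + a*b*Δ + b^2*k : ℤ) : ℂ) := by
      rw [← Complex.mul_conj, hmul]
    exact_mod_cast h2
  have hpos : 0 < Complex.normSq ((a:ℂ) + b * tau Δ) := Complex.normSq_pos.mpr hx0
  have hN1 : (1:ℤ) ≤ a^2 + a*b*Δ + b^2*k := by
    by_contra hcon
    push_neg at hcon
    have : ((a^2 + a*b*Δ + b^2*k : ℤ) : ℝ) ≤ 0 := by exact_mod_cast (by omega : (a^2 + a*b*Δ + b^2*k : ℤ) ≤ 0)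
    linarith [hnsq ▸ hpos]
  have h1 : (1:ℝ) ≤ Complex.normSq ((a:ℂ) + b * tau Δ) := by
    rw [hnsq]; exact_mod_cast hN1
  nlinarith [Complex.sq_norm ((a:ℂ) + b * tau Δ), norm_nonneg ((a:ℂ) + b * tau Δ)]
theorem stmt9 (Δ : ℤ) (hΔneg : Δ < 0) (hΔmod : Δ % 4 = 0 ∨ Δ % 4 = 1)
    (B : Set ℂ) (ε : ℝ) (hε0 : 0 < ε) (hε1 : ε < 1) (hadm : Admissible Δ B ε)
    (z : ℂ) (R : Run Δ B ε z ⊤)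
    (p q : ℂ) (hp : p ∈ O Δ) (hq : q ∈ O Δ) (hq0 : q ≠ 0)
    (hnotconv : ∀ m : ℕ, 1 ≤ m → p * R.q m ≠ q * R.p m)
    (n : ℕ) (hn : 1 ≤ n) :
    ‖R.q n * (R.q n * z - R.p n)‖ <
      4 * ε * mu B ^ 2 * ‖q * (q * z - p)‖ / (1 - ε ^ 2) ^ 2 := by
  classical
  obtain ⟨hBne, hBfin, hBO, hB0, -⟩ := hadm
  set μ := mu B with hμdef
  have h1le : ∀ m : ℕ, 1 ≤ m + 1 := fun m => Nat.le_add_left 1 m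
  have hb0 : ∀ m : ℕ, R.b (m : ℤ) ≠ 0 := by
    intro m
    cases m with
    | zero => rw [show ((0:ℕ):ℤ) = 0 by norm_num, R.b_zero]; exact one_ne_zero
    | succ i =>
      intro h
      exact hB0 (h ▸ R.hb (i+1) (h1le i) le_top)
  have hbabs : ∀ m : ℕ, 1 ≤ m → ‖R.b (m:ℤ)‖ ≤ μ := by
    intro m hm
    exact le_csSup (hBfin.image _).bddAbove ⟨_, R.hb m hm le_top, rfl⟩
  have hμ1 : 1 ≤ μ := by
    have hb1B := R.hb 1 le_rfl le_top
    have h1 : 1 ≤ ‖R.b 1‖ :=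
      one_le_abs_of_mem_O Δ hΔneg hΔmod _ (hBO hb1B) (fun h => hB0 (h ▸ hb1B))
    exact le_trans h1 (by exact_mod_cast hbabs 1 le_rfl)
  have hε2 : 0 < 1 - ε^2 := by nlinarith
  have hμ0 : 0 < μ := lt_of_lt_of_le one_pos hμ1
  set e : ℕ → ℂ := fun m => R.q (m:ℤ) * z - R.p (m:ℤ) with he
  have he0 : e 0 = -1 := by
    simp only [he, Nat.cast_zero, R.q_zero, R.p_zero]; ring
  have hc1 : ∀ m : ℕ, ((m+1 : ℕ) : ℤ) - 1 = (m : ℤ) := by intro m; push_cast; ring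
  have hc2 : ∀ m : ℕ, ((m+1 : ℕ) : ℤ) - 2 = (m : ℤ) - 1 := by intro m; push_cast; ring
  have hpm : ∀ m : ℕ, R.p ((m+1:ℕ):ℤ) * R.b (m:ℤ)
      = R.a ((m+1:ℕ):ℤ) * R.p (m:ℤ) + R.b ((m+1:ℕ):ℤ) * R.p ((m:ℤ)-1) := by
    intro m
    have h := R.hp (m+1) (h1le m) le_top
    rw [hc1 m, hc2 m] at h
    rw [h, div_mul_cancel₀ _ (hb0 m)]
  have hqm : ∀ m : ℕ, R.q ((m+1:ℕ):ℤ) * R.b (m:ℤ)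
      = R.a ((m+1:ℕ):ℤ) * R.q (m:ℤ) + R.b ((m+1:ℕ):ℤ) * R.q ((m:ℤ)-1) := by
    intro m
    have h := R.hq (m+1) (h1le m) le_top
    rw [hc1 m, hc2 m] at h
    rw [h, div_mul_cancel₀ _ (hb0 m)]
  have hdet : ∀ m : ℕ, R.p (m:ℤ) * R.q ((m:ℤ)-1) - R.q (m:ℤ) * R.p ((m:ℤ)-1)
      = (-1)^m * R.b (m:ℤ) := by
    intro m
    induction m with
    | zero =>
      norm_num [R.p_zero, R.q_zero, R.p_neg_one, R.q_neg_one, R.b_zero]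
    | succ i ih =>
      rw [hc1 i]
      have h1 := hpm i
      have h2 := hqm i
      have goal' : (R.p ((i+1:ℕ):ℤ) * R.q (i:ℤ) - R.q ((i+1:ℕ):ℤ) * R.p (i:ℤ)) * R.b (i:ℤ)
          = ((-1)^(i+1) * R.b ((i+1:ℕ):ℤ)) * R.b (i:ℤ) := by
        linear_combination (R.q (i:ℤ)) * h1 - (R.p (i:ℤ)) * h2 - (R.b ((i+1:ℕ):ℤ)) * ih
      exact mul_right_cancel₀ (hb0 i) goal'
  have ht0 : ∀ m : ℕ, R.b ((m+1:ℕ):ℤ) * R.zs (m:ℤ) - R.a ((m+1:ℕ):ℤ) ≠ 0 := by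
    intro m
    have h := R.hne (m+1) (h1le m) le_top
    rwa [hc1 m] at h
  have htle : ∀ m : ℕ, ‖R.b ((m+1:ℕ):ℤ) * R.zs (m:ℤ) - R.a ((m+1:ℕ):ℤ)‖
      ≤ ε * ‖R.b (m:ℤ)‖ := by
    intro m
    have h := R.hclose (m+1) (h1le m) le_top
    rwa [hc1 m] at h
  have hzs : ∀ m : ℕ, R.zs ((m+1:ℕ):ℤ)
      = R.b (m:ℤ) / (R.b ((m+1:ℕ):ℤ) * R.zs (m:ℤ) - R.a ((m+1:ℕ):ℤ)) := by
    intro m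
    have h := R.hz (m+1) (h1le m) le_top
    rwa [hc1 m] at h
  have hE2 : ∀ m : ℕ, e (m+1) * R.b (m:ℤ)
      = R.a ((m+1:ℕ):ℤ) * e m + R.b ((m+1:ℕ):ℤ) * (R.q ((m:ℤ)-1) * z - R.p ((m:ℤ)-1)) := by
    intro m
    simp only [he]
    linear_combination z * hqm m - hpm m
  have herec : ∀ m : ℕ, e (m+1)
      = -((R.b ((m+1:ℕ):ℤ) * R.zs (m:ℤ) - R.a ((m+1:ℕ):ℤ)) / R.b (m:ℤ)) * e m := by
    intro m
    induction m with
    | zero =>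
      have h := hE2 0
      simp only [Nat.cast_zero, zero_sub, R.q_neg_one, R.p_neg_one, R.b_zero, R.zs_zero] at h ⊢
      simp only [he, Nat.cast_zero, R.q_zero, R.p_zero] at h ⊢
      field_simp
      linear_combination h
    | succ i ih =>
      have h := hE2 (i+1)
      rw [hc1 i] at h
      have hem : (R.q ((i:ℤ)) * z - R.p ((i:ℤ))) = e i := by simp only [he]
      rw [hem] at h
      have ht := ht0 i
      have hbi := hb0 i
      have hbi' := hb0 (i+1)
      have ihm : e (i+1) * R.b (i:ℤ)
          = -(R.b ((i+1:ℕ):ℤ) * R.zs (i:ℤ) - R.a ((i+1:ℕ):ℤ)) * e i := by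
        rw [ih]; field_simp
      have key : e (i+1+1) * (R.b ((i+1:ℕ):ℤ) * (R.b ((i+1:ℕ):ℤ) * R.zs (i:ℤ) - R.a ((i+1:ℕ):ℤ)))
          = -(R.b ((i+1+1:ℕ):ℤ) * R.b (i:ℤ)
              - R.a ((i+1+1:ℕ):ℤ) * (R.b ((i+1:ℕ):ℤ) * R.zs (i:ℤ) - R.a ((i+1:ℕ):ℤ))) * e (i+1) := by
        linear_combination (R.b ((i+1:ℕ):ℤ) * R.zs (i:ℤ) - R.a ((i+1:ℕ):ℤ)) * h
          + (R.b ((i+1+1:ℕ):ℤ)) * ihm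
      rw [hzs i]
      have expand : ∀ (B2 A2 B1 bi t E : ℂ), t ≠ 0 → B1 ≠ 0 →
          -((B2 * (bi / t) - A2) / B1) * E = (-(B2 * bi - A2 * t) * E) / (B1 * t) := by
        intros B2 A2 B1 bi t E ht1 hB1
        field_simp
      rw [expand _ _ _ _ _ _ ht hbi']
      rw [eq_div_iff (mul_ne_zero hbi' ht)]
      linear_combination key
  have hene : ∀ m : ℕ, e m ≠ 0 := by
    intro m
    induction m with
    | zero => rw [he0]; norm_num
    | succ i ih =>
      rw [herec i]
      exact mul_ne_zero (neg_ne_zero.mpr (div_ne_zero (ht0 i) (hb0 i))) ih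
  have heabs : ∀ m : ℕ, ‖e (m+1)‖ ≤ ε * ‖e m‖ := by
    intro m
    rw [herec m]
    rw [norm_mul, norm_neg, norm_div]
    have hbpos : 0 < ‖R.b (m:ℤ)‖ := norm_pos_iff.mpr (hb0 m)
    have hdivle : ‖R.b ((m+1:ℕ):ℤ) * R.zs (m:ℤ) - R.a ((m+1:ℕ):ℤ)‖
        / ‖R.b (m:ℤ)‖ ≤ ε := by
      rw [div_le_iff₀ hbpos]
      exact htle m
    exact mul_le_mul_of_nonneg_right hdivle (norm_nonneg _)
  have hepow : ∀ m : ℕ, ‖e m‖ ≤ ε ^ m := by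
    intro m
    induction m with
    | zero => rw [he0]; norm_num
    | succ i ih =>
      calc ‖e (i+1)‖ ≤ ε * ‖e i‖ := heabs i
        _ ≤ ε * ε ^ i := mul_le_mul_of_nonneg_left ih (le_of_lt hε0)
        _ = ε ^ (i+1) := by ring
  have hcross : ∀ m : ℕ, R.q ((m+1:ℕ):ℤ) * e m - R.q (m:ℤ) * e (m+1)
      = (-1)^(m+1) * R.b ((m+1:ℕ):ℤ) := by
    intro m
    have hd := hdet (m+1)
    rw [hc1 m] at hd
    simp only [he]
    linear_combination hd
  have hstep2 : ∀ m : ℕ, ‖R.q ((m+1:ℕ):ℤ) * e m‖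
      ≤ ε * ‖R.q (m:ℤ) * e m‖ + μ := by
    intro m
    have h : R.q ((m+1:ℕ):ℤ) * e m = R.q (m:ℤ) * e (m+1) + (-1)^(m+1) * R.b ((m+1:ℕ):ℤ) := by
      linear_combination hcross m
    rw [h]
    refine le_trans (norm_add_le _ _) ?_
    have h2 : ‖(-1:ℂ)^(m+1) * R.b ((m+1:ℕ):ℤ)‖ = ‖R.b ((m+1:ℕ):ℤ)‖ := by
      rw [norm_mul, norm_pow, norm_neg, norm_one, one_pow, one_mul]
    rw [h2]
    refine add_le_add ?_ (hbabs (m+1) (h1le m))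
    rw [norm_mul, norm_mul]
    calc ‖R.q (m:ℤ)‖ * ‖e (m+1)‖
        ≤ ‖R.q (m:ℤ)‖ * (ε * ‖e m‖) :=
          mul_le_mul_of_nonneg_left (heabs m) (norm_nonneg _)
      _ = ε * (‖R.q (m:ℤ)‖ * ‖e m‖) := by ring
  have hstep3 : ∀ m : ℕ, ‖R.q ((m+1:ℕ):ℤ) * e (m+1)‖
      ≤ ε * ‖R.q ((m+1:ℕ):ℤ) * e m‖ := by
    intro m
    rw [norm_mul, norm_mul]
    calc ‖R.q ((m+1:ℕ):ℤ)‖ * ‖e (m+1)‖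
        ≤ ‖R.q ((m+1:ℕ):ℤ)‖ * (ε * ‖e m‖) :=
          mul_le_mul_of_nonneg_left (heabs m) (norm_nonneg _)
      _ = ε * (‖R.q ((m+1:ℕ):ℤ)‖ * ‖e m‖) := by ring
  have hTbound : ∀ m : ℕ, ‖R.q (m:ℤ) * e m‖ < ε * μ / (1 - ε^2) := by
    intro m
    induction m with
    | zero =>
      rw [show ((0:ℕ):ℤ) = 0 by norm_num, R.q_zero, zero_mul, norm_zero]
      positivity
    | succ i ih =>
      have h1 := hstep2 i
      have h2 := hstep3 i
      have hX : ε^2 * (ε*μ/(1-ε^2)) + ε*μ = ε*μ/(1-ε^2) := by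
        field_simp
        ring
      have h3 := mul_le_mul_of_nonneg_left h1 (le_of_lt hε0)
      have h4 := mul_lt_mul_of_pos_left ih (mul_pos hε0 hε0)
      nlinarith [h2, h3, h4, hX, hε0.le]
  have hQD2 : ∀ m : ℕ, ‖R.q ((m+1:ℕ):ℤ) * e m‖ < μ / (1 - ε^2) := by
    intro m
    have h1 := hstep2 m
    have h2 := hTbound m
    have hX : ε*(ε*μ/(1-ε^2)) + μ = μ/(1-ε^2) := by
      field_simp
      ring
    have h3 := mul_lt_mul_of_pos_left h2 hε0
    linarith
  have habsq : 1 ≤ ‖q‖ := one_le_abs_of_mem_O Δ hΔneg hΔmod q hq hq0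
  have habssub : ∀ x y : ℂ, ‖x - y‖ ≤ ‖x‖ + ‖y‖ := by
    intro x y
    calc ‖x - y‖ = ‖x + (-y)‖ := by rw [sub_eq_add_neg]
      _ ≤ ‖x‖ + ‖-y‖ := norm_add_le _ _
      _ = ‖x‖ + ‖y‖ := by rw [norm_neg]
  have hLeg : (1 - ε^2) / (4*μ) ≤ ‖q‖ * ‖q*z - p‖ := by
    by_contra hcon
    push_neg at hcon
    have hex : ∃ m : ℕ, ‖q‖ * ‖e m‖ < 1/2 := by
      obtain ⟨m, hm⟩ := exists_pow_lt_of_lt_one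
        (show (0:ℝ) < 1/(2*‖q‖) by positivity) hε1
      refine ⟨m, ?_⟩
      have h2 : ‖q‖ * ‖e m‖ ≤ ‖q‖ * ε^m :=
        mul_le_mul_of_nonneg_left (hepow m) (norm_nonneg q)
      have h3 : ‖q‖ * ε^m < ‖q‖ * (1/(2*‖q‖)) :=
        mul_lt_mul_of_pos_left hm (by positivity)
      have h4 : ‖q‖ * (1/(2*‖q‖)) = 1/2 := by
        field_simp
      linarith
    have hm0 := Nat.find_spec hex
    set m0 := Nat.find hex with hm0def
    have hm0pos : m0 ≠ 0 := by
      intro h0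
      rw [h0, he0] at hm0
      simp only [norm_neg, norm_one, mul_one] at hm0
      linarith
    obtain ⟨i, hi⟩ : ∃ i, m0 = i + 1 := ⟨m0 - 1, by omega⟩
    have hprev : 1/2 ≤ ‖q‖ * ‖e i‖ := by
      by_contra hc
      push_neg at hc
      exact Nat.find_min hex (show i < m0 by omega) hc
    have hpOm := R.hpO (i+1) (h1le i) le_top
    have hqOm := R.hqO (i+1) (h1le i) le_top
    have hrO : p * R.q ((i+1:ℕ):ℤ) - q * R.p ((i+1:ℕ):ℤ) ∈ O Δ :=
      sub_mem (mul_mem hp hqOm) (mul_mem hq hpOm)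
    have hrne : p * R.q ((i+1:ℕ):ℤ) - q * R.p ((i+1:ℕ):ℤ) ≠ 0 :=
      sub_ne_zero.mpr (hnotconv (i+1) (h1le i))
    have hr1 : 1 ≤ ‖p * R.q ((i+1:ℕ):ℤ) - q * R.p ((i+1:ℕ):ℤ)‖ :=
      one_le_abs_of_mem_O Δ hΔneg hΔmod _ hrO hrne
    have hrdec : p * R.q ((i+1:ℕ):ℤ) - q * R.p ((i+1:ℕ):ℤ)
        = q * e (i+1) - R.q ((i+1:ℕ):ℤ) * (q*z - p) := by
      simp only [he]; ring
    have hA : ‖q * e (i+1)‖ < 1/2 := by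
      rw [hi] at hm0
      rw [norm_mul]
      exact hm0
    have hB : ‖R.q ((i+1:ℕ):ℤ) * (q*z - p)‖ < 1/2 := by
      have k1 : ‖R.q ((i+1:ℕ):ℤ)‖ * ‖e i‖ < μ/(1-ε^2) := by
        rw [← norm_mul]
        exact hQD2 i
      have p1 : (‖R.q ((i+1:ℕ):ℤ)‖ * ‖e i‖)
          * (‖q‖ * ‖q*z-p‖)
          < (μ/(1-ε^2)) * ((1-ε^2)/(4*μ)) :=
        mul_lt_mul'' k1 hcon
          (mul_nonneg (norm_nonneg _) (norm_nonneg _))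
          (mul_nonneg (norm_nonneg _) (norm_nonneg _))
      have p2 : (μ/(1-ε^2)) * ((1-ε^2)/(4*μ)) = 1/4 := by
        field_simp
      rw [norm_mul]
      nlinarith [mul_nonneg (norm_nonneg (R.q ((i+1:ℕ):ℤ))) (norm_nonneg (q*z-p)),
        norm_nonneg (e i), norm_nonneg q]
    rw [hrdec] at hr1
    have := habssub (q * e (i+1)) (R.q ((i+1:ℕ):ℤ) * (q*z - p))
    linarith
  have hfin : ‖R.q (n:ℤ) * e n‖ < ε * μ / (1 - ε^2) := hTbound n
  have hrhs : ε * μ / (1 - ε^2) ≤ 4 * ε * μ^2 * ‖q * (q*z - p)‖ / (1-ε^2)^2 := by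
    have heq : 4 * ε * μ^2 * ((1 - ε^2)/(4*μ)) / (1-ε^2)^2 = ε * μ / (1-ε^2) := by
      field_simp
    rw [← heq]
    have hle : (1 - ε^2)/(4*μ) ≤ ‖q * (q*z - p)‖ := by
      rw [norm_mul]
      exact hLeg
    gcongr
  calc ‖R.q (n:ℤ) * (R.q (n:ℤ) * z - R.p (n:ℤ))‖
      = ‖R.q (n:ℤ) * e n‖ := by simp only [he]
    _ < ε * μ / (1 - ε^2) := hfin
    _ ≤ 4 * ε * μ^2 * ‖q * (q*z - p)‖ / (1-ε^2)^2 := hrhs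
end CFNE
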